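/- arXiv:cs/0505075 — 4 statements merged into one kernel-verified Lean document; each statement's English description precedes it below -/
import Mathlib

section
/- Fix n ≥ 1 and i coprime to 6 with i ≤ n. Define the layer L_i = { i·2^k·3^s : k,s ≥ 0, i·2^k·3^s ≤ n }, and for s ≥ 0 let row_s = { i·2^k·3^s ≤ n : k ≥ 0 } with length r_s = |row_s|. Then for any s with r_{s+1} ≥ 1, we have 1 ≤ r_s − r_{s+1} ≤ 2. -/
lemma card_row_aux (n M : ℕ) (hM : 1 ≤ M) (hMn : M ≤ n) :
    ((Finset.range (n + 1)).filter (fun k => M * 2 ^ k ≤ n)).card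
      = Nat.log 2 (n / M) + 1 := by
  have hdiv : 1 ≤ n / M := (Nat.one_le_div_iff hM).mpr hMn
  set L := Nat.log 2 (n / M) with hL
  have hset : ((Finset.range (n + 1)).filter (fun k => M * 2 ^ k ≤ n))
      = Finset.range (L + 1) := by
    ext k
    simp only [Finset.mem_filter, Finset.mem_range, Nat.lt_succ_iff]
    constructor
    · rintro ⟨-, hk⟩
      have h2 : 2 ^ k ≤ n / M := (Nat.le_div_iff_mul_le hM).mpr (by linarith [hk, Nat.mul_comm M (2^k)])
      exact (Nat.le_log_iff_pow_le one_lt_two (by omega)).mpr h2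
    · intro hk
      have h2 : 2 ^ k ≤ n / M :=
        le_trans (Nat.pow_le_pow_right (by norm_num) hk) (Nat.pow_log_le_self 2 (by omega))
      have hmul : M * 2 ^ k ≤ n := by
        have := (Nat.le_div_iff_mul_le hM).mp h2
        linarith [Nat.mul_comm (2^k) M, this]
      refine ⟨?_, hmul⟩
      calc k ≤ 2 ^ k := (Nat.lt_two_pow_self (n := k)) |>.le
        _ ≤ n / M := h2
        _ ≤ n := Nat.div_le_self _ _
  rw [hset, Finset.card_range]

lemma log_step (b a : ℕ) (hb : 1 ≤ b) (h1 : 3 * b ≤ a) (h2 : a ≤ 3 * b + 2) :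
    Nat.log 2 b + 1 ≤ Nat.log 2 a ∧ Nat.log 2 a ≤ Nat.log 2 b + 2 := by
  set L := Nat.log 2 b with hL
  constructor
  · have h2b : Nat.log 2 (b * 2) = L + 1 := Nat.log_mul_base one_lt_two (by omega)
    calc L + 1 = Nat.log 2 (b * 2) := h2b.symm
      _ ≤ Nat.log 2 a := Nat.log_mono_right (by omega)
  · have hlt : b < 2 ^ (L + 1) := Nat.lt_pow_succ_log_self one_lt_two b
    have : a < 2 ^ (L + 3) := by
      have : (2:ℕ) ^ (L + 3) = 8 * 2 ^ L := by ring
      have h8 : 4 * 2 ^ (L + 1) = 2 ^ (L + 3) := by ring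
      omega
    have := Nat.log_lt_of_lt_pow (by omega) this
    omega

theorem stmt_4 (n i : ℕ) (hn : 1 ≤ n) (hi : Nat.Coprime i 6) (hin : 1 ≤ i) (hile : i ≤ n)
    (r : ℕ → ℕ)
    (hr : ∀ s, r s = ((Finset.range (n + 1)).filter (fun k => i * 2 ^ k * 3 ^ s ≤ n)).card)
    (s : ℕ) (hpos : 1 ≤ r (s + 1)) :
    r (s + 1) + 1 ≤ r s ∧ r s ≤ r (s + 1) + 2 := by
  have hrw : ∀ t, r t = ((Finset.range (n + 1)).filter
      (fun k => (i * 3 ^ t) * 2 ^ k ≤ n)).card := by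
    intro t
    rw [hr t]
    congr 1
    apply Finset.filter_congr
    intro k _
    constructor <;> intro h <;> simpa [mul_comm, mul_assoc, mul_left_comm] using h
  -- i * 3^(s+1) ≤ n
  have hM1 : 1 ≤ i * 3 ^ s := Nat.one_le_iff_ne_zero.mpr (by positivity)
  have hMsn : i * 3 ^ (s + 1) ≤ n := by
    by_contra hcon
    push_neg at hcon
    have : ((Finset.range (n + 1)).filter
        (fun k => (i * 3 ^ (s+1)) * 2 ^ k ≤ n)) = ∅ := by
      apply Finset.filter_false_of_mem
      intro k _
      push_neg
      calc n < i * 3 ^ (s+1) := hcon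
        _ ≤ i * 3 ^ (s+1) * 2 ^ k := Nat.le_mul_of_pos_right _ (by positivity)
    rw [hrw (s+1), this] at hpos
    simp at hpos
  have hMn : i * 3 ^ s ≤ n := by
    refine le_trans ?_ hMsn
    exact Nat.mul_le_mul_left i (Nat.pow_le_pow_right (by norm_num) (Nat.le_succ s))
  have hM31 : 1 ≤ i * 3 ^ (s + 1) := Nat.one_le_iff_ne_zero.mpr (by positivity)
  have hr1 : r s = Nat.log 2 (n / (i * 3 ^ s)) + 1 := by
    rw [hrw s, card_row_aux n _ hM1 hMn]
  have hr2 : r (s + 1) = Nat.log 2 (n / (i * 3 ^ (s + 1))) + 1 := by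
    rw [hrw (s + 1), card_row_aux n _ hM31 hMsn]
  set a := n / (i * 3 ^ s) with ha
  set b := n / (i * 3 ^ (s + 1)) with hbdef
  have hb : b = a / 3 := by
    rw [hbdef, ha, show i * 3 ^ (s + 1) = i * 3 ^ s * 3 by ring, ← Nat.div_div_eq_div_mul]
  have hb1 : 1 ≤ b := (Nat.one_le_div_iff hM31).mpr hMsn
  have hkey : 3 * b ≤ a ∧ a ≤ 3 * b + 2 := by
    have hmod := Nat.div_add_mod a 3
    have hlt : a % 3 < 3 := Nat.mod_lt _ (by norm_num)
    omega
  obtain ⟨h1, h2⟩ := log_step b a hb1 hkey.1 hkey.2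
  omega
end

section
/- Fix n ≥ 1 and i coprime to 6 with i ≤ n. For s ≥ 0 let r_s = |{ k ≥ 0 : i·2^k·3^s ≤ n }| be the length of row s of layer L_i. Then there is no index s with r_s ≥ 1 such that r_{s} = r_{s+1} + 1 and r_{s+1} = r_{s+2} + 1 (with r_{s+2} ≥ 1); i.e., there cannot be three consecutive nonempty rows whose lengths each decrease by exactly 1. -/
lemma key_row (n i s : ℕ) (hi : 1 ≤ i) :
    ∀ k, i * 2 ^ k * 3 ^ s ≤ n ↔
      k < ((Finset.range (n + 1)).filter (fun k => i * 2 ^ k * 3 ^ s ≤ n)).card := by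
  have hP : ¬ (i * 2 ^ n * 3 ^ s ≤ n) := by
    intro h
    have h2 : n < 2 ^ n := Nat.lt_two_pow_self
    have h3 : 2 ^ n ≤ i * 2 ^ n * 3 ^ s := by
      calc 2 ^ n = 1 * 2 ^ n * 1 := by ring
        _ ≤ i * 2 ^ n * 3 ^ s :=
          Nat.mul_le_mul (Nat.mul_le_mul_right _ hi) (Nat.one_le_pow _ _ (by norm_num))
    omega
  have hex : ∃ k, ¬ (i * 2 ^ k * 3 ^ s ≤ n) := ⟨n, hP⟩
  set c := Nat.find hex with hc
  have hcn : c ≤ n := Nat.find_min' hex hP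
  have hiff : ∀ k, i * 2 ^ k * 3 ^ s ≤ n ↔ k < c := by
    intro k
    constructor
    · intro hk
      by_contra h
      push_neg at h
      have hnc := Nat.find_spec hex
      apply hnc
      calc i * 2 ^ c * 3 ^ s ≤ i * 2 ^ k * 3 ^ s := by
            apply Nat.mul_le_mul_right
            exact Nat.mul_le_mul_left _ (Nat.pow_le_pow_right (by norm_num) h)
        _ ≤ n := hk
    · intro hk
      have := Nat.find_min hex hk
      simpa using this
  have hfe : (Finset.range (n + 1)).filter (fun k => i * 2 ^ k * 3 ^ s ≤ n)
      = Finset.range c := by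
    ext k
    simp only [Finset.mem_filter, Finset.mem_range]
    constructor
    · rintro ⟨_, hk⟩; exact (hiff k).mp hk
    · intro hk; exact ⟨by omega, (hiff k).mpr hk⟩
  intro k
  rw [hfe, Finset.card_range]
  exact hiff k

theorem stmt_5 (n i : ℕ) (hn : 1 ≤ n) (hi : Nat.Coprime i 6) (hin : 1 ≤ i) (hile : i ≤ n)
    (r : ℕ → ℕ)
    (hr : ∀ s, r s = ((Finset.range (n + 1)).filter (fun k => i * 2 ^ k * 3 ^ s ≤ n)).card)
    (s : ℕ) (hpos : 1 ≤ r (s + 2)) :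
    ¬ (r s = r (s + 1) + 1 ∧ r (s + 1) = r (s + 2) + 1) := by
  rintro ⟨h1, h2⟩
  obtain ⟨d, hd⟩ : ∃ d, r (s + 2) = d + 1 := ⟨r (s + 2) - 1, by omega⟩
  have hA : i * 2 ^ d * 3 ^ (s + 2) ≤ n := by
    rw [key_row n i (s + 2) hin d, ← hr (s + 2)]
    omega
  have hB : ¬ (i * 2 ^ (d + 3) * 3 ^ s ≤ n) := by
    rw [key_row n i s hin (d + 3), ← hr s]
    omega
  apply hB
  have e1 : i * 2 ^ (d + 3) * 3 ^ s = i * 2 ^ d * 3 ^ s * 8 := by ring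
  have e2 : i * 2 ^ d * 3 ^ (s + 2) = i * 2 ^ d * 3 ^ s * 9 := by ring
  have : i * 2 ^ d * 3 ^ s * 8 ≤ i * 2 ^ d * 3 ^ s * 9 :=
    Nat.mul_le_mul_left _ (by norm_num)
  omega
end

section
/- Fix n ≥ 1 and i coprime to 6 with i ≤ n. For s ≥ 0 let r_s = |{ k ≥ 0 : i·2^k·3^s ≤ n }|. Then there is no index s such that r_s, r_{s+1}, r_{s+2}, r_{s+3} are all ≥ 1 and r_s = r_{s+1} + 2, r_{s+1} = r_{s+2} + 2, r_{s+2} = r_{s+3} + 2; i.e., there cannot be four consecutive nonempty rows whose lengths each decrease by exactly 2. -/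
theorem stmt_6 (n i : ℕ) (hn : 1 ≤ n) (hi : Nat.Coprime i 6) (hin : 1 ≤ i) (hile : i ≤ n)
    (r : ℕ → ℕ)
    (hr : ∀ s, r s = ((Finset.range (n + 1)).filter (fun k => i * 2 ^ k * 3 ^ s ≤ n)).card)
    (s : ℕ) (hpos : 1 ≤ r (s + 3)) :
    ¬ (r s = r (s + 1) + 2 ∧ r (s + 1) = r (s + 2) + 2 ∧ r (s + 2) = r (s + 3) + 2) := by
  rintro ⟨h1, h2, h3⟩
  have up : ∀ t c, i * 2 ^ c * 3 ^ t ≤ n → c + 1 ≤ r t := by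
    intro t c hc
    rw [hr t]
    have hsub : Finset.range (c + 1) ⊆
        (Finset.range (n + 1)).filter (fun k => i * 2 ^ k * 3 ^ t ≤ n) := by
      intro k hk
      simp only [Finset.mem_range, Finset.mem_filter] at *
      have hk' : k ≤ c := Nat.lt_succ_iff.mp hk
      have hp : i * 2 ^ k * 3 ^ t ≤ n := by
        refine le_trans ?_ hc
        gcongr <;> norm_num
      have h2k : 2 ^ k ≤ n := by
        refine le_trans ?_ hp
        have h3 : 1 ≤ 3 ^ t := Nat.one_le_pow _ _ (by norm_num)
        calc 2 ^ k = 1 * 2 ^ k * 1 := by ring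
          _ ≤ i * 2 ^ k * 3 ^ t := by gcongr
      have := @Nat.lt_two_pow_self k
      constructor
      · omega
      · exact hp
    calc c + 1 = (Finset.range (c + 1)).card := (Finset.card_range _).symm
      _ ≤ _ := Finset.card_le_card hsub
  have down : ∀ t c, n < i * 2 ^ c * 3 ^ t → r t ≤ c := by
    intro t c hc
    rw [hr t]
    have hsub : (Finset.range (n + 1)).filter (fun k => i * 2 ^ k * 3 ^ t ≤ n) ⊆
        Finset.range c := by
      intro k hk
      simp only [Finset.mem_range, Finset.mem_filter] at *
      by_contra hkc
      push_neg at hkc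
      have : i * 2 ^ c * 3 ^ t ≤ i * 2 ^ k * 3 ^ t := by gcongr <;> norm_num
      omega
    calc _ ≤ (Finset.range c).card := Finset.card_le_card hsub
      _ = c := Finset.card_range _
  set m := r (s + 3) with hm
  have hB : n < i * 2 ^ m * 3 ^ (s + 3) := by
    by_contra h
    push_neg at h
    have := up (s + 3) m h
    omega
  have hA : i * 2 ^ (m + 5) * 3 ^ s ≤ n := by
    by_contra h
    push_neg at h
    have := down s (m + 5) h
    omega
  have hfin : i * 2 ^ m * 3 ^ (s + 3) ≤ i * 2 ^ (m + 5) * 3 ^ s := by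
    rw [pow_add, pow_add]
    calc i * 2 ^ m * (3 ^ s * 3 ^ 3) = i * 2 ^ m * 3 ^ s * 27 := by ring
      _ ≤ i * 2 ^ m * 3 ^ s * 32 := Nat.mul_le_mul_left _ (by norm_num)
      _ = i * (2 ^ m * 2 ^ 5) * 3 ^ s := by ring
  omega
end

section
/- The infinite series Σ_{k=1}^{∞} ⌈log₂(k+1)⌉ / 2^{k+1} equals Σ_{t=0}^{∞} 1/2^{2^t}. -/
open Finset

noncomputable def Faux (t k : ℕ) : ℝ :=
  if 2 ^ t < k + 2 then (1:ℝ) / 2 ^ (k + 2) else 0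

lemma sumB (t : ℕ) : HasSum (Faux t) ((1:ℝ) / 2 ^ (2 ^ t)) := by
  set m := 2 ^ t - 1 with hm
  have hmt : m + 1 = 2 ^ t := by have := Nat.one_le_two_pow (n := t); omega
  have hgeo : HasSum (fun k : ℕ => ((1:ℝ)/2) ^ k * ((1:ℝ) / 2 ^ (m + 2)))
      (((1:ℝ) - 1/2)⁻¹ * ((1:ℝ) / 2 ^ (m + 2))) :=
    (hasSum_geometric_of_lt_one (by norm_num) (by norm_num)).mul_right _
  have h1 : HasSum (fun k : ℕ => Faux t (k + m)) ((1:ℝ) / 2 ^ (m + 1)) := by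
    have hfe : (fun k : ℕ => Faux t (k + m))
        = fun k : ℕ => ((1:ℝ)/2) ^ k * ((1:ℝ) / 2 ^ (m + 2)) := by
      funext k
      have hlt : 2 ^ t < k + m + 2 := by omega
      simp only [Faux, hlt, if_true]
      rw [div_pow, one_pow, div_mul_div_comm, one_mul, ← pow_add, add_assoc]
    have hval : ((1:ℝ) - 1/2)⁻¹ * ((1:ℝ) / 2 ^ (m + 2)) = (1:ℝ) / 2 ^ (m + 1) := by
      rw [pow_succ]
      field_simp
      ring
    rw [hfe, ← hval]
    exact hgeo
  have h2 := (hasSum_nat_add_iff (f := Faux t) m).mp h1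
  have hzero : ∑ i ∈ Finset.range m, Faux t i = 0 := by
    apply Finset.sum_eq_zero
    intro i hi
    simp only [Finset.mem_range] at hi
    have hni : ¬ (2 ^ t < i + 2) := by omega
    simp [Faux, hni]
  rw [hzero, add_zero, hmt] at h2
  exact h2

lemma sumA (k : ℕ) :
    HasSum (fun t : ℕ => Faux t k) ((Nat.clog 2 (k + 2) : ℝ) / 2 ^ (k + 2)) := by
  have hfun : ∀ t : ℕ, Faux t k
      = if t ∈ Finset.range (Nat.clog 2 (k + 2)) then (1:ℝ) / 2 ^ (k + 2) else 0 := by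
    intro t
    simp only [Faux, Finset.mem_range, Nat.lt_clog_iff_pow_lt one_lt_two]
  have h : HasSum (fun t : ℕ => Faux t k)
      (∑ t ∈ Finset.range (Nat.clog 2 (k + 2)), Faux t k) := by
    apply hasSum_sum_of_ne_finset_zero
    intro t ht
    rw [hfun t, if_neg ht]
  convert h using 1
  rw [Finset.sum_congr rfl (fun t ht => by rw [hfun t, if_pos ht]),
    Finset.sum_const, Finset.card_range, nsmul_eq_mul, mul_one_div]

lemma sumF : Summable (Function.uncurry Faux) := by
  apply (summable_prod_of_nonneg ?_).mpr
  constructor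
  · intro t; exact (sumB t).summable
  · refine Summable.of_nonneg_of_le ?_ ?_
      (summable_geometric_of_lt_one (r := (1:ℝ)/2) (by norm_num) (by norm_num))
    · intro t
      exact tsum_nonneg fun k => by simp only [Function.uncurry, Faux]; split <;> positivity
    · intro t
      simp only [Function.uncurry]
      rw [(sumB t).tsum_eq]
      have h1 : (t : ℕ) ≤ 2 ^ t := Nat.le_of_lt (Nat.lt_two_pow_self (n := t))
      rw [div_pow, one_pow]
      apply div_le_div_of_nonneg_left (by norm_num) (by positivity)
      exact pow_le_pow_right₀ (by norm_num) h1
  · intro p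
    unfold Function.uncurry Faux
    split <;> positivity

theorem stmt_18 :
    ∑' k : ℕ, ((Nat.clog 2 (k + 2) : ℝ) / 2 ^ (k + 2))
      = ∑' t : ℕ, (1 : ℝ) / 2 ^ (2 ^ t) := by
  calc ∑' k : ℕ, ((Nat.clog 2 (k + 2) : ℝ) / 2 ^ (k + 2))
      = ∑' (k : ℕ) (t : ℕ), Faux t k :=
        tsum_congr fun k => (sumA k).tsum_eq.symm
    _ = ∑' (t : ℕ) (k : ℕ), Faux t k := Summable.tsum_comm sumF
    _ = ∑' t : ℕ, (1 : ℝ) / 2 ^ (2 ^ t) :=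
        tsum_congr fun t => (sumB t).tsum_eq
end
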